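/- arXiv:0712.1300 — 2 statements merged into one kernel-verified Lean document; each statement's English description precedes it below -/
import Mathlib

section
/- There exists a constant C > 0 such that for all δ ∈ (0, 1/2), all t ≥ 1, all r, v ∈ ℝ with |r| ≤ δ/t and |v| ≤ δ, and all s ∈ [0, t] (so that 1 − r·s ≥ 3/4 > 0), the matrix u₊(s)⁻¹ · u₋(r) · g(v) · u₊( s / (e^v·(1 − r·s)) ) lies within distance C·δ of the identity matrix, where distance is measured by the supremum of the absolute values of the entries of the difference of the 2×2 real matrices. (Equivalently: the points x·u₊(s) and y·u₊(α(s)), with y = x·u₋(r)·g(v) and α(s) = s/(e^v(1−rs)), stay within distance C·δ of each other for 0 ≤ s ≤ t.) -/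
open Matrix

noncomputable section

abbrev SL2R := Matrix.SpecialLinearGroup (Fin 2) ℝ

/-- The positive horocycle matrix `u₊(t) = [[1, t], [0, 1]]`. -/
def uplus (t : ℝ) : SL2R :=
  ⟨!![1, t; 0, 1], by simp [Matrix.det_fin_two_of]⟩

/-- The negative horocycle matrix `u₋(t) = [[1, 0], [t, 1]]`. -/
def uminus (t : ℝ) : SL2R :=
  ⟨!![1, 0; t, 1], by simp [Matrix.det_fin_two_of]⟩

/-- The geodesic flow matrix `g(s) = [[exp(s/2), 0], [0, exp(−s/2)]]. -/
def gmat (s : ℝ) : SL2R :=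
  ⟨!![Real.exp (s / 2), 0; 0, Real.exp (-(s / 2))], by
    simp [Matrix.det_fin_two_of, ← Real.exp_add]⟩

lemma uplus_inv (s : ℝ) : (uplus s)⁻¹ = uplus (-s) := by
  apply inv_eq_of_mul_eq_one_right
  apply Subtype.ext
  show (!![1, s; 0, 1] : Matrix (Fin 2) (Fin 2) ℝ) * !![1, -s; 0, 1] = 1
  rw [Matrix.mul_fin_two, Matrix.one_fin_two]
  norm_num

lemma key_product (s r v β : ℝ) :
    (((uplus s)⁻¹ * uminus r * gmat v * uplus β : SL2R) : Matrix (Fin 2) (Fin 2) ℝ) =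
      !![(1 - r * s) * Real.exp (v / 2),
         (1 - r * s) * Real.exp (v / 2) * β - s * Real.exp (-(v / 2));
         r * Real.exp (v / 2),
         r * Real.exp (v / 2) * β + Real.exp (-(v / 2))] := by
  rw [uplus_inv]
  show (!![1, -s; 0, 1] : Matrix (Fin 2) (Fin 2) ℝ) * !![1, 0; r, 1] *
      !![Real.exp (v / 2), 0; 0, Real.exp (-(v / 2))] * !![1, β; 0, 1] = _
  rw [Matrix.mul_fin_two, Matrix.mul_fin_two, Matrix.mul_fin_two]
  congr 1 <;> ring

/-- Horocycle shadowing lemma: there is a constant `C > 0` such that for all `0 < δ < 1/2`,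
`t ≥ 1`, `|r| ≤ δ/t`, `|v| ≤ δ` and `0 ≤ s ≤ t`, the matrix
`u₊(s)⁻¹·u₋(r)·g(v)·u₊(s/(eᵛ(1 − rs)))` is within distance `C·δ` of the identity,
where distance is the supremum of the absolute values of the entries of the difference. -/
theorem horocycles_stay_close :
    ∃ C : ℝ, 0 < C ∧ ∀ δ t r v s : ℝ, 0 < δ → δ < 1 / 2 → 1 ≤ t →
      |r| ≤ δ / t → |v| ≤ δ → 0 ≤ s → s ≤ t →
      ∀ i j : Fin 2,
        |(((uplus s)⁻¹ * uminus r * gmat v *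
            uplus (s / (Real.exp v * (1 - r * s))) : SL2R) :
              Matrix (Fin 2) (Fin 2) ℝ) i j - (1 : Matrix (Fin 2) (Fin 2) ℝ) i j| ≤ C * δ := by
  refine ⟨12, by norm_num, ?_⟩
  intro δ t r v s hδ hδ2 ht hr hv hs hst i j
  have ht0 : (0:ℝ) < t := lt_of_lt_of_le one_pos ht
  have hrt : |r| * t ≤ δ := by
    have := (le_div_iff₀ ht0).mp hr; linarith
  have hrs : |r * s| ≤ δ := by
    rw [abs_mul, abs_of_nonneg hs]
    calc |r| * s ≤ |r| * t := mul_le_mul_of_nonneg_left hst (abs_nonneg r)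
    _ ≤ δ := hrt
  have hrd : |r| ≤ δ := le_trans hr (div_le_self hδ.le ht)
  have hrs2 : |r * s| < 1/2 := lt_of_le_of_lt hrs hδ2
  have hrs1 : (1:ℝ)/2 ≤ 1 - r * s := by
    have := abs_le.mp (le_of_lt hrs2); linarith [this.1, this.2]
  have hrsu : 1 - r * s ≤ 3/2 := by
    have := abs_le.mp (le_of_lt hrs2); linarith [this.1, this.2]
  have hne : (1 : ℝ) - r * s ≠ 0 := by linarith
  have hv2 : |v / 2| ≤ 1 := by rw [abs_div, abs_two]; linarith
  have hexp1 : |Real.exp (v / 2) - 1| ≤ δ := by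
    calc |Real.exp (v / 2) - 1| ≤ 2 * |v / 2| := Real.abs_exp_sub_one_le hv2
    _ = |v| := by rw [abs_div, abs_two]; ring
    _ ≤ δ := hv
  have ha1 : Real.exp (v / 2) ≤ 1 + δ := by have := abs_le.mp hexp1; linarith [this.2]
  have ha2 : 1 - δ ≤ Real.exp (v / 2) := by have := abs_le.mp hexp1; linarith [this.1]
  have ha3 : (1:ℝ)/2 < Real.exp (v / 2) := by linarith
  have ha4 : Real.exp (v / 2) ≤ 3/2 := by linarith
  have haz : Real.exp (v / 2) ≠ 0 := (Real.exp_pos _).ne'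
  set a := Real.exp (v / 2) with ha
  have hev : Real.exp v = a * a := by rw [ha, ← Real.exp_add]; ring_nf
  have hevn : Real.exp (-(v/2)) = 1 / a := by
    rw [ha, Real.exp_neg, one_div]
  rw [key_product]
  have h01 : (1 - r * s) * a * (s / (Real.exp v * (1 - r * s))) - s * Real.exp (-(v / 2)) = 0 := by
    rw [hev, hevn]; field_simp; ring
  have h11 : r * a * (s / (Real.exp v * (1 - r * s))) + Real.exp (-(v / 2)) =
      1 / (a * (1 - r * s)) := by
    rw [hev, hevn]; field_simp; ring
  rw [h01, h11]
  have hbound00 : |(1 - r * s) * a - 1| ≤ 3 * δ := by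
    have he : (1 - r * s) * a - 1 = (a - 1) - (r * s) * a := by ring
    have hb : |(r * s) * a| ≤ δ * (3/2) := by
      rw [abs_mul]
      exact mul_le_mul hrs (by rw [abs_of_pos (by linarith : (0:ℝ) < a)]; exact ha4)
        (abs_nonneg a) hδ.le
    rw [he]
    calc |(a - 1) - (r * s) * a| ≤ |a - 1| + |(r * s) * a| := abs_sub _ _
    _ ≤ δ + δ * (3/2) := add_le_add hexp1 hb
    _ ≤ 3 * δ := by linarith
  have hbound10 : |r * a| ≤ 12 * δ := by
    rw [abs_mul]
    calc |r| * |a| ≤ δ * (3/2) :=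
        mul_le_mul hrd (by rw [abs_of_pos (by linarith : (0:ℝ) < a)]; exact ha4)
          (abs_nonneg a) hδ.le
    _ ≤ 12 * δ := by linarith
  have hbound11 : |1 / (a * (1 - r * s)) - 1| ≤ 12 * δ := by
    have hpos : (1:ℝ)/4 ≤ a * (1 - r * s) := by nlinarith
    have he : 1 / (a * (1 - r * s)) - 1 = (1 - a * (1 - r * s)) / (a * (1 - r * s)) := by
      field_simp
    rw [he, abs_div, abs_of_pos (by linarith : (0:ℝ) < a * (1 - r * s)),
      div_le_iff₀ (by linarith : (0:ℝ) < a * (1 - r * s))]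
    have h1 : |1 - a * (1 - r * s)| ≤ 3 * δ := by
      rw [show (1:ℝ) - a * (1 - r * s) = -((1 - r * s) * a - 1) by ring, abs_neg]
      exact hbound00
    nlinarith
  have hinv : (1 - r * s)⁻¹ * a⁻¹ = 1 / (a * (1 - r * s)) := by
    rw [one_div, mul_inv]; ring
  fin_cases i <;> fin_cases j <;> simp [Matrix.one_fin_two]
  · show |(1 - r * s) * a - 1| ≤ 12 * δ
    linarith [hbound00]
  · positivity
  · rw [abs_mul, abs_of_pos (by linarith : (0:ℝ) < a)] at hbound10
    exact hbound10
  · show |(1 - r * s)⁻¹ * a⁻¹ - 1| ≤ 12 * δ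
    rw [hinv]; exact hbound11
end
end

section
/- The set P of points of X that are periodic for the horocycle flow has measure zero: μ(P) = 0. -/
open MeasureTheory Filter Matrix

noncomputable section

instance : TopologicalSpace SL2R :=
  inferInstanceAs (TopologicalSpace {A : Matrix (Fin 2) (Fin 2) ℝ // A.det = 1})

instance : MeasurableSpace SL2R := borel SL2R

/-- The quotient `Γ \ G` of `G = SL(2,ℝ)` by left multiplication by `Γ`,
i.e. the space of right cosets `Γg`. -/
abbrev XΓ (Γ : Subgroup SL2R) := Quotient (QuotientGroup.rightRel Γ)

/-- Right translation on `Γ \ G`. -/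
def rmul {Γ : Subgroup SL2R} (x : XΓ Γ) (A : SL2R) : XΓ Γ :=
  Quotient.map' (· * A)
    (fun a b h => by
      rw [QuotientGroup.rightRel_apply] at h ⊢
      simpa [_root_.mul_inv_rev, mul_assoc] using h) x

/-! ### Topological and measurable structure of `SL(2,ℝ)` -/

instance : BorelSpace SL2R := ⟨rfl⟩

lemma continuous_coeSL : Continuous (fun g : SL2R => (g : Matrix (Fin 2) (Fin 2) ℝ)) :=
  continuous_subtype_val

instance : IsTopologicalGroup SL2R where
  continuous_mul := by
    apply continuous_induced_rng.mpr
    exact (continuous_coeSL.comp continuous_fst).matrix_mul (continuous_coeSL.comp continuous_snd)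
  continuous_inv := by
    apply continuous_induced_rng.mpr
    exact continuous_coeSL.matrix_adjugate.congr
      fun g => (Matrix.SpecialLinearGroup.coe_inv g).symm

instance : T2Space SL2R :=
  inferInstanceAs (T2Space {A : Matrix (Fin 2) (Fin 2) ℝ // A.det = 1})

instance : SecondCountableTopology (Matrix (Fin 2) (Fin 2) ℝ) :=
  inferInstanceAs (SecondCountableTopology (Fin 2 → Fin 2 → ℝ))

instance : SecondCountableTopology SL2R :=
  TopologicalSpace.secondCountableTopology_induced SL2R (Matrix (Fin 2) (Fin 2) ℝ)
    (fun g : SL2R => (g : Matrix (Fin 2) (Fin 2) ℝ))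

lemma continuous_entry (i j : Fin 2) :
    Continuous fun g : SL2R => (g : Matrix (Fin 2) (Fin 2) ℝ) i j := by
  exact ((continuous_apply j).comp ((continuous_apply i).comp continuous_coeSL))

lemma measurable_entry (i j : Fin 2) :
    Measurable fun g : SL2R => (g : Matrix (Fin 2) (Fin 2) ℝ) i j :=
  (continuous_entry i j).measurable

lemma continuous_uplus : Continuous uplus := by
  apply continuous_induced_rng.mpr
  apply continuous_matrix
  intro i j
  fin_cases i <;> fin_cases j <;> simp [uplus] <;> fun_prop

/-! ### Basic lemmas on `rmul` and `uplus` -/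

lemma rmul_mk {Γ : Subgroup SL2R} (g A : SL2R) :
    rmul (Γ := Γ) (Quotient.mk'' g) A = Quotient.mk'' (g * A) := rfl

lemma rmul_mul {Γ : Subgroup SL2R} (x : XΓ Γ) (A B : SL2R) :
    rmul x (A * B) = rmul (rmul x A) B := by
  induction x using Quotient.inductionOn' with
  | h g => simp [rmul_mk, mul_assoc]

lemma rmul_one {Γ : Subgroup SL2R} (x : XΓ Γ) : rmul x 1 = x := by
  induction x using Quotient.inductionOn' with
  | h g => simp [rmul_mk]

lemma rmul_cancel {Γ : Subgroup SL2R} {x y : XΓ Γ} (A : SL2R) (h : rmul x A = rmul y A) :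
    x = y := by
  have := congrArg (fun z => rmul z A⁻¹) h
  simpa [← rmul_mul, rmul_one] using this

lemma uplus_zero : uplus 0 = 1 :=
  Subtype.ext (by simp [uplus, Matrix.one_fin_two])

lemma uplus_add (s t : ℝ) : uplus (s + t) = uplus s * uplus t := by
  apply Subtype.ext
  change !![1, s + t; 0, 1] = !![1, s; 0, 1] * !![1, t; 0, 1]
  simp [uplus, Matrix.SpecialLinearGroup.coe_mul, Matrix.mul_fin_two]
  ring_nf

lemma measurable_rmul {Γ : Subgroup SL2R} (A : SL2R) :
    Measurable fun x : XΓ Γ => rmul x A := by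
  rw [measurable_from_quotient]
  exact measurable_quotient_mk''.comp (continuous_mul_right A).measurable

/-- Periodicity at `mk g` with period `t` means `g (u t) g⁻¹ ∈ Γ`. -/
lemma period_iff {Γ : Subgroup SL2R} (g : SL2R) (t : ℝ) :
    rmul (Γ := Γ) (Quotient.mk'' g) (uplus t) = Quotient.mk'' g ↔ g * uplus t * g⁻¹ ∈ Γ := by
  rw [rmul_mk, Quotient.eq'', QuotientGroup.rightRel_apply,
    show g * (g * uplus t)⁻¹ = (g * uplus t * g⁻¹)⁻¹ by group]
  exact inv_mem_iff

lemma period_iff' {Γ : Subgroup SL2R} (g : SL2R) (t : ℝ) :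
    rmul (Γ := Γ) (Quotient.mk'' g) (uplus t) = Quotient.mk'' g ↔
      ∃ γ : Γ, g * uplus t = (γ : SL2R) * g := by
  rw [period_iff]
  constructor
  · intro h
    exact ⟨⟨_, h⟩, by group⟩
  · rintro ⟨γ, hγ⟩
    have : g * uplus t * g⁻¹ = ↑γ := by rw [hγ]; group
    rw [this]; exact γ.2

/-! ### The unique candidate period -/

/-- If `g * uplus t = h` has a solution `t`, it is `τ g h`. -/
def τ (g h : SL2R) : ℝ :=
  if (g : Matrix (Fin 2) (Fin 2) ℝ) 0 0 = 0
  then ((h : Matrix (Fin 2) (Fin 2) ℝ) 1 1 - (g : Matrix (Fin 2) (Fin 2) ℝ) 1 1) /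
    (g : Matrix (Fin 2) (Fin 2) ℝ) 1 0
  else ((h : Matrix (Fin 2) (Fin 2) ℝ) 0 1 - (g : Matrix (Fin 2) (Fin 2) ℝ) 0 1) /
    (g : Matrix (Fin 2) (Fin 2) ℝ) 0 0

lemma tau_eq {g h : SL2R} {t : ℝ} (ht : g * uplus t = h) : τ g h = t := by
  subst ht
  have hm : ((g * uplus t : SL2R) : Matrix (Fin 2) (Fin 2) ℝ) =
      (g : Matrix (Fin 2) (Fin 2) ℝ) * !![1, t; 0, 1] := rfl
  have e01 : ((g * uplus t : SL2R) : Matrix (Fin 2) (Fin 2) ℝ) 0 1 =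
      (g : Matrix (Fin 2) (Fin 2) ℝ) 0 0 * t + (g : Matrix (Fin 2) (Fin 2) ℝ) 0 1 := by
    rw [hm]; simp [Matrix.mul_apply, Fin.sum_univ_two]
  have e11 : ((g * uplus t : SL2R) : Matrix (Fin 2) (Fin 2) ℝ) 1 1 =
      (g : Matrix (Fin 2) (Fin 2) ℝ) 1 0 * t + (g : Matrix (Fin 2) (Fin 2) ℝ) 1 1 := by
    rw [hm]; simp [Matrix.mul_apply, Fin.sum_univ_two]
  have hdet : (g : Matrix (Fin 2) (Fin 2) ℝ) 0 0 * (g : Matrix (Fin 2) (Fin 2) ℝ) 1 1 -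
      (g : Matrix (Fin 2) (Fin 2) ℝ) 0 1 * (g : Matrix (Fin 2) (Fin 2) ℝ) 1 0 = 1 := by
    rw [← Matrix.det_fin_two]; exact g.2
  unfold τ
  split_ifs with h00
  · have h10 : (g : Matrix (Fin 2) (Fin 2) ℝ) 1 0 ≠ 0 := by
      intro h10
      rw [h00, h10] at hdet; simp at hdet
    rw [e11]; field_simp; ring
  · rw [e01]; field_simp; ring

lemma measurable_tau (γ : SL2R) : Measurable fun g : SL2R => τ g (γ * g) := by
  unfold τ
  have hγ : ∀ i j, Measurable fun g : SL2R =>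
      ((γ * g : SL2R) : Matrix (Fin 2) (Fin 2) ℝ) i j := fun i j =>
    (measurable_entry i j).comp (continuous_mul_left γ).measurable
  apply Measurable.ite
  · exact measurableSet_eq_fun (measurable_entry 0 0) measurable_const
  · exact ((hγ 1 1).sub (measurable_entry 1 1)).div (measurable_entry 1 0)
  · exact ((hγ 0 1).sub (measurable_entry 0 1)).div (measurable_entry 0 0)

/-! ### The sets `PT Γ T` of points with a period in `(0, T]` -/

def PT (Γ : Subgroup SL2R) (T : ℝ) : Set (XΓ Γ) :=
  {x | ∃ t : ℝ, 0 < t ∧ t ≤ T ∧ rmul x (uplus t) = x}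

lemma PT_mono (Γ : Subgroup SL2R) {T T' : ℝ} (h : T ≤ T') : PT Γ T ⊆ PT Γ T' := by
  rintro x ⟨t, ht0, htT, hx⟩
  exact ⟨t, ht0, htT.trans h, hx⟩

set_option maxHeartbeats 1000000 in
lemma preimage_PT (Γ : Subgroup SL2R) (T : ℝ) :
    Quotient.mk'' ⁻¹' (PT Γ T) =
      ⋃ γ : Γ, {g : SL2R | g * uplus (τ g ((γ : SL2R) * g)) = (γ : SL2R) * g ∧
        0 < τ g ((γ : SL2R) * g) ∧ τ g ((γ : SL2R) * g) ≤ T} := by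
  ext g
  simp only [Set.mem_preimage, PT, Set.mem_setOf_eq, Set.mem_iUnion]
  constructor
  · rintro ⟨t, ht0, htT, hper⟩
    obtain ⟨γ, hγ⟩ := (period_iff' g t).mp hper
    have ht : τ g ((γ : SL2R) * g) = t := tau_eq hγ
    exact ⟨γ, by rw [ht]; exact hγ, by rw [ht]; exact ht0, by rw [ht]; exact htT⟩
  · rintro ⟨γ, h1, h2, h3⟩
    exact ⟨_, h2, h3, (period_iff' g _).mpr ⟨γ, h1⟩⟩

lemma measurable_PT (Γ : Subgroup SL2R) [DiscreteTopology Γ] (T : ℝ) :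
    MeasurableSet (PT Γ T) := by
  have : Countable Γ := TopologicalSpace.separableSpace_iff_countable.mp inferInstance
  rw [measurableSet_quotient, preimage_PT]
  apply MeasurableSet.iUnion
  intro γ
  have hmulmeas : ∀ i j, Measurable fun g : SL2R =>
      (((γ : SL2R) * g : SL2R) : Matrix (Fin 2) (Fin 2) ℝ) i j := fun i j =>
    (measurable_entry i j).comp (continuous_mul_left (γ : SL2R)).measurable
  have key : ∀ (i j : Fin 2), Measurable fun g : SL2R =>
      ((g * uplus (τ g ((γ : SL2R) * g)) : SL2R) : Matrix (Fin 2) (Fin 2) ℝ) i j := by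
    intro i j
    have hrw : ∀ g : SL2R, ((g * uplus (τ g ((γ : SL2R) * g)) : SL2R) : Matrix (Fin 2) (Fin 2) ℝ) i j =
        (g : Matrix (Fin 2) (Fin 2) ℝ) i 0 *
          (!![1, τ g ((γ : SL2R) * g); 0, 1] : Matrix (Fin 2) (Fin 2) ℝ) 0 j +
        (g : Matrix (Fin 2) (Fin 2) ℝ) i 1 *
          (!![1, τ g ((γ : SL2R) * g); 0, 1] : Matrix (Fin 2) (Fin 2) ℝ) 1 j := by
      intro g
      rw [show ((g * uplus (τ g ((γ : SL2R) * g)) : SL2R) : Matrix (Fin 2) (Fin 2) ℝ) =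
        (g : Matrix (Fin 2) (Fin 2) ℝ) * !![1, τ g ((γ : SL2R) * g); 0, 1] from rfl]
      simp [Matrix.mul_apply, Fin.sum_univ_two]
    simp only [hrw]
    fin_cases j
    · simpa using measurable_entry i 0
    · simp only [Fin.mk_one, Fin.zero_eta, Fin.isValue, Matrix.of_apply, Matrix.cons_val',
        Matrix.cons_val_zero, Matrix.cons_val_one, Matrix.empty_val', Matrix.cons_val_fin_one,
        mul_one]
      exact ((measurable_entry i 0).mul (measurable_tau (γ : SL2R))).add
        (measurable_entry i 1)
  have h1 : MeasurableSet {g : SL2R | g * uplus (τ g ((γ : SL2R) * g)) = (γ : SL2R) * g} := by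
    have hset : {g : SL2R | g * uplus (τ g ((γ : SL2R) * g)) = (γ : SL2R) * g} =
        ⋂ i : Fin 2, ⋂ j : Fin 2,
          {g : SL2R | ((g * uplus (τ g ((γ : SL2R) * g)) : SL2R) : Matrix (Fin 2) (Fin 2) ℝ) i j =
            (((γ : SL2R) * g : SL2R) : Matrix (Fin 2) (Fin 2) ℝ) i j} := by
      ext g
      simp only [Set.mem_setOf_eq, Set.mem_iInter]
      constructor
      · intro h i j; rw [h]
      · intro h
        exact Matrix.SpecialLinearGroup.ext _ _ h
    rw [hset]
    exact MeasurableSet.iInter fun i => MeasurableSet.iInter fun j =>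
      measurableSet_eq_fun (key i j) (hmulmeas i j)
  have h2 : MeasurableSet {g : SL2R | 0 < τ g ((γ : SL2R) * g) ∧ τ g ((γ : SL2R) * g) ≤ T} :=
    measurable_tau (γ : SL2R) measurableSet_Ioc (t := Set.Ioc 0 T)
  exact h1.inter h2

/-! ### Scaling by diagonal matrices -/

def dmat (r : ℝ) (hr : r ≠ 0) : SL2R :=
  ⟨!![r, 0; 0, r⁻¹], by simp [Matrix.det_fin_two_of, mul_inv_cancel₀ hr]⟩

lemma uplus_mul_dmat (t r : ℝ) (hr : r ≠ 0) :
    uplus t * dmat r hr = dmat r hr * uplus (t / r ^ 2) := by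
  apply Subtype.ext
  rw [Matrix.SpecialLinearGroup.coe_mul, Matrix.SpecialLinearGroup.coe_mul]
  show (!![1, t; 0, 1] : Matrix (Fin 2) (Fin 2) ℝ) * !![r, 0; 0, r⁻¹] =
    !![r, 0; 0, r⁻¹] * !![1, t / r ^ 2; 0, 1]
  rw [Matrix.mul_fin_two, Matrix.mul_fin_two]
  have ht : t * r⁻¹ = r * (t / r ^ 2) := by field_simp
  ext i j
  fin_cases i <;> fin_cases j <;> simp [ht]

lemma mem_PT_scale {Γ : Subgroup SL2R} {r : ℝ} (hr : r ≠ 0) (T : ℝ) (x : XΓ Γ) :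
    rmul x (dmat r hr) ∈ PT Γ (T / r ^ 2) ↔ x ∈ PT Γ T := by
  have hr2 : (0 : ℝ) < r ^ 2 := by positivity
  constructor
  · rintro ⟨s, hs0, hsT, hper⟩
    refine ⟨s * r ^ 2, by positivity, ?_, ?_⟩
    · exact (le_div_iff₀ hr2).mp hsT
    · have hd : dmat r hr * uplus s = uplus (s * r ^ 2) * dmat r hr := by
        rw [uplus_mul_dmat (s * r ^ 2) r hr, mul_div_cancel_right₀ _ (ne_of_gt hr2)]
      rw [← rmul_mul, hd, rmul_mul] at hper
      exact rmul_cancel _ hper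
  · rintro ⟨t, ht0, htT, hper⟩
    refine ⟨t / r ^ 2, by positivity, ?_, ?_⟩
    · exact div_le_div_of_nonneg_right htT hr2.le
    · rw [← rmul_mul, ← uplus_mul_dmat, rmul_mul, hper]

lemma measure_PT_scale {Γ : Subgroup SL2R} [DiscreteTopology Γ]
    (μ : Measure (XΓ Γ)) (hμ : ∀ B : SL2R, Measure.map (fun x => rmul x B) μ = μ)
    {r : ℝ} (hr : r ≠ 0) (T : ℝ) :
    μ (PT Γ T) = μ (PT Γ (T / r ^ 2)) := by
  have hset : (fun x => rmul x (dmat r hr)) ⁻¹' (PT Γ (T / r ^ 2)) = PT Γ T :=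
    Set.ext fun x => mem_PT_scale hr T x
  calc μ (PT Γ T) = μ ((fun x => rmul x (dmat r hr)) ⁻¹' (PT Γ (T / r ^ 2))) := by rw [hset]
    _ = Measure.map (fun x => rmul x (dmat r hr)) μ (PT Γ (T / r ^ 2)) :=
        (Measure.map_apply (measurable_rmul _) (measurable_PT Γ _)).symm
    _ = μ (PT Γ (T / r ^ 2)) := by rw [hμ]

/-! ### No point has arbitrarily small periods -/

lemma iInter_PT_empty (Γ : Subgroup SL2R) [DiscreteTopology Γ] :
    ⋂ k : ℕ, PT Γ (1 / (k + 1 : ℝ)) = ∅ := by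
  ext x
  simp only [Set.mem_iInter, Set.mem_empty_iff_false, iff_false]
  intro hx
  induction x using Quotient.inductionOn' with
  | h g =>
  -- the set of periods is an additive subgroup of ℝ
  set S : AddSubgroup ℝ :=
    { carrier := {t : ℝ | rmul (Γ := Γ) (Quotient.mk'' g) (uplus t) = Quotient.mk'' g}
      zero_mem' := by
        simp only [Set.mem_setOf_eq, uplus_zero, rmul_one]
      add_mem' := by
        intro a b ha hb
        simp only [Set.mem_setOf_eq] at ha hb ⊢
        rw [uplus_add, rmul_mul, ha, hb]
      neg_mem' := by
        intro a ha
        simp only [Set.mem_setOf_eq] at ha ⊢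
        have h0 : rmul (Γ := Γ) (Quotient.mk'' g) (uplus (a + -a)) = Quotient.mk'' g := by
          rw [add_neg_cancel, uplus_zero, rmul_one]
        rw [uplus_add, rmul_mul, ha] at h0
        exact h0 } with hS
  have hmem : ∀ t : ℝ, t ∈ S ↔ rmul (Γ := Γ) (Quotient.mk'' g) (uplus t) = Quotient.mk'' g :=
    fun t => Iff.rfl
  -- S is closed
  have hScont : Continuous fun t : ℝ => g * uplus t * g⁻¹ :=
    (continuous_const.mul continuous_uplus).mul continuous_const
  have hSclosed : IsClosed (S : Set ℝ) := by
    have : (S : Set ℝ) = (fun t : ℝ => g * uplus t * g⁻¹) ⁻¹' (Γ : Set SL2R) := by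
      ext t
      rw [SetLike.mem_coe, hmem t]
      exact period_iff g t
    rw [this]
    exact (Subgroup.isClosed_of_discrete (H := Γ)).preimage hScont
  -- S is dense
  have hSdense : Dense (S : Set ℝ) := by
    apply S.dense_of_not_isolated_zero
    intro ε hε
    obtain ⟨k, hk⟩ := exists_nat_one_div_lt hε
    obtain ⟨t, ht0, htle, hper⟩ := hx k
    exact ⟨t, (hmem t).mpr hper, ht0, lt_of_le_of_lt htle hk⟩
  -- hence S = ℝ and every t is a period
  have hall : ∀ t : ℝ, g * uplus t * g⁻¹ ∈ Γ := by
    intro t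
    rw [← period_iff, ← hmem t]
    have : (S : Set ℝ) = Set.univ := by
      rw [← hSclosed.closure_eq, hSdense.closure_eq]
    exact (Set.eq_univ_iff_forall.mp this) t
  -- contradiction with discreteness of Γ via connectedness of ℝ
  let c : ℝ → Γ := fun t => ⟨g * uplus t * g⁻¹, hall t⟩
  have hc : Continuous c := hScont.subtype_mk _
  have hclopen : IsClopen (c ⁻¹' {c 0}) :=
    ⟨(isClosed_discrete {c 0}).preimage hc, (isOpen_discrete {c 0}).preimage hc⟩
  have h01 : c 1 = c 0 := by
    rcases isClopen_iff.mp hclopen with h | h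
    · have h0 : (0 : ℝ) ∈ c ⁻¹' {c 0} := rfl
      rw [h] at h0
      exact absurd h0 (Set.notMem_empty _)
    · have : (1 : ℝ) ∈ c ⁻¹' {c 0} := h ▸ Set.mem_univ _
      exact this
  have huplus : uplus 1 = uplus 0 := by
    have h2 : g * uplus 1 * g⁻¹ = g * uplus 0 * g⁻¹ := congrArg Subtype.val h01
    have h3 := mul_right_cancel h2
    exact mul_left_cancel h3
  have h := congrArg (fun A : SL2R => (A : Matrix (Fin 2) (Fin 2) ℝ) 0 1) huplus
  simp [uplus] at h

/-! ### Main theorem -/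

/-- The set `P` of points of `X = Γ \ G` that are periodic for the horocycle flow has
measure zero. -/
theorem periodic_points_measure_zero
    (Γ : Subgroup SL2R) [DiscreteTopology Γ]
    (μ : Measure (XΓ Γ)) [IsProbabilityMeasure μ]
    (hμ : ∀ B : SL2R, Measure.map (fun x => rmul x B) μ = μ) :
    μ {x : XΓ Γ | ∃ t : ℝ, 0 < t ∧ rmul x (uplus t) = x} = 0 := by
  have key : ∀ T : ℝ, 0 < T → μ (PT Γ T) = 0 := by
    intro T hT
    have hconst : ∀ k : ℕ, μ (PT Γ (1 / (k + 1 : ℝ))) = μ (PT Γ T) := by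
      intro k
      have hk1 : (0 : ℝ) < (k + 1 : ℝ) := by positivity
      set r : ℝ := Real.sqrt (T * (k + 1)) with hrdef
      have hr0 : 0 < r := Real.sqrt_pos.mpr (by positivity)
      have hr : r ≠ 0 := ne_of_gt hr0
      have hr2 : r ^ 2 = T * (k + 1) := Real.sq_sqrt (by positivity)
      have hTr : T / r ^ 2 = 1 / (k + 1 : ℝ) := by
        rw [hr2]; field_simp
      have := measure_PT_scale μ hμ hr T
      rw [hTr] at this
      exact this.symm
    have hanti : Antitone fun k : ℕ => PT Γ (1 / (k + 1 : ℝ)) := by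
      intro k m hkm
      apply PT_mono
      apply one_div_le_one_div_of_le (by positivity)
      have : (k : ℝ) ≤ m := Nat.cast_le.mpr hkm
      linarith
    have hiInf := hanti.measure_iInter (μ := μ)
      (fun k => (measurable_PT Γ _).nullMeasurableSet) ⟨0, measure_ne_top μ _⟩
    rw [iInter_PT_empty Γ, measure_empty] at hiInf
    simp only [hconst, iInf_const] at hiInf
    exact hiInf.symm
  have hsub : {x : XΓ Γ | ∃ t : ℝ, 0 < t ∧ rmul x (uplus t) = x} ⊆
      ⋃ n : ℕ, PT Γ (n + 1 : ℝ) := by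
    rintro x ⟨t, ht0, hper⟩
    obtain ⟨n, hn⟩ := exists_nat_ge t
    exact Set.mem_iUnion.mpr ⟨n, t, ht0, hn.trans (by linarith), hper⟩
  exact measure_mono_null hsub
    (measure_iUnion_null fun n => key (n + 1 : ℝ) (by positivity))
end
end
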